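/- Suppose a ≥ 0, b ≥ 0, and c, d ∈ ℝ with c ≠ 0, c² ≠ d². Then ∫_0^a ∫_0^b e^{c(τ+τ') - d|τ-τ'|} dτ dτ' = (1/(c²-d²)) · (1 + (d/c)(1 - e^{2c(a∧b)}) - e^{ca - d|a|} - e^{cb - d|b|} + e^{c(a+b) - d|a-b|}). -/

import Mathlib

open Real MeasureTheory intervalIntegral

lemma int_exp (k : ℝ) (hk : k ≠ 0) (x y : ℝ) :
    ∫ t in x..y, Real.exp (k * t) = (Real.exp (k * y) - Real.exp (k * x)) / k := by
  have h : ∀ t : ℝ, HasDerivAt (fun t => Real.exp (k * t) / k) (Real.exp (k * t)) t := by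
    intro t
    have h2 := (((hasDerivAt_id t).const_mul k).exp).div_const k
    refine h2.congr_deriv ?_
    field_simp
    rfl
  rw [intervalIntegral.integral_eq_sub_of_hasDerivAt (fun t _ => h t)
    ((Real.continuous_exp.comp (continuous_const.mul continuous_id)).intervalIntegrable x y)]
  ring

lemma inner_int (b c d s : ℝ) (hs : 0 ≤ s) (hsb : s ≤ b)
    (h1 : c + d ≠ 0) (h2 : c - d ≠ 0) :
    (∫ τ in (0:ℝ)..b, Real.exp (c * (τ + s) - d * |τ - s|))
      = Real.exp ((c - d) * s) * ((Real.exp ((c + d) * s) - 1) / (c + d))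
        + Real.exp ((c + d) * s) * ((Real.exp ((c - d) * b) - Real.exp ((c - d) * s)) / (c - d)) := by
  have hcont : Continuous fun τ : ℝ => Real.exp (c * (τ + s) - d * |τ - s|) := by
    fun_prop
  rw [← intervalIntegral.integral_add_adjacent_intervals (a := (0:ℝ)) (b := s) (c := b)
    (hcont.intervalIntegrable 0 s) (hcont.intervalIntegrable s b)]
  have e1 : (∫ τ in (0:ℝ)..s, Real.exp (c * (τ + s) - d * |τ - s|))
      = ∫ τ in (0:ℝ)..s, Real.exp ((c - d) * s) * Real.exp ((c + d) * τ) := by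
    apply intervalIntegral.integral_congr
    intro τ hτ
    dsimp only
    rw [Set.uIcc_of_le hs] at hτ
    rw [abs_of_nonpos (by linarith [hτ.2]), ← Real.exp_add]
    ring_nf
  have e2 : (∫ τ in s..b, Real.exp (c * (τ + s) - d * |τ - s|))
      = ∫ τ in s..b, Real.exp ((c + d) * s) * Real.exp ((c - d) * τ) := by
    apply intervalIntegral.integral_congr
    intro τ hτ
    dsimp only
    rw [Set.uIcc_of_le hsb] at hτ
    rw [abs_of_nonneg (by linarith [hτ.1]), ← Real.exp_add]
    ring_nf
  rw [e1, e2, intervalIntegral.integral_const_mul, intervalIntegral.integral_const_mul,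
    int_exp _ h1, int_exp _ h2]
  rw [mul_zero, Real.exp_zero]

lemma key (a b c d : ℝ) (ha : 0 ≤ a) (hab : a ≤ b) (hc : c ≠ 0)
    (h1 : c + d ≠ 0) (h2 : c - d ≠ 0) :
    (∫ τ' in (0:ℝ)..a, ∫ τ in (0:ℝ)..b, Real.exp (c * (τ + τ') - d * |τ - τ'|))
      = (1 / (c ^ 2 - d ^ 2)) *
        (1 + (d / c) * (1 - Real.exp (2 * c * a))
          - Real.exp ((c - d) * a) - Real.exp ((c - d) * b)
          + Real.exp ((c - d) * b) * Real.exp ((c + d) * a)) := by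
  have h2c : (2 : ℝ) * c ≠ 0 := by positivity
  have e1 : (∫ τ' in (0:ℝ)..a, ∫ τ in (0:ℝ)..b, Real.exp (c * (τ + τ') - d * |τ - τ'|))
      = ∫ s in (0:ℝ)..a,
          ((1 / (c + d)) * Real.exp (2 * c * s) - (1 / (c + d)) * Real.exp ((c - d) * s)
            + (Real.exp ((c - d) * b) / (c - d)) * Real.exp ((c + d) * s)
            - (1 / (c - d)) * Real.exp (2 * c * s)) := by
    apply intervalIntegral.integral_congr
    intro s hs
    dsimp only
    rw [Set.uIcc_of_le ha] at hs
    rw [inner_int b c d s hs.1 (le_trans hs.2 hab) h1 h2]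
    have he : Real.exp (2 * c * s) = Real.exp ((c - d) * s) * Real.exp ((c + d) * s) := by
      rw [← Real.exp_add]; ring_nf
    rw [he]
    field_simp
    ring
  have ii : ∀ k : ℝ, IntervalIntegrable (fun s => Real.exp (k * s)) volume 0 a :=
    fun k => (Real.continuous_exp.comp (continuous_const.mul continuous_id)).intervalIntegrable 0 a
  rw [e1, intervalIntegral.integral_sub
      ((((ii (2*c)).const_mul _).sub ((ii (c-d)).const_mul _)).add ((ii (c+d)).const_mul _))
      ((ii (2*c)).const_mul _),
    intervalIntegral.integral_add (((ii (2*c)).const_mul _).sub ((ii (c-d)).const_mul _))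
      ((ii (c+d)).const_mul _),
    intervalIntegral.integral_sub ((ii (2*c)).const_mul _) ((ii (c-d)).const_mul _),
    intervalIntegral.integral_const_mul, intervalIntegral.integral_const_mul,
    intervalIntegral.integral_const_mul, intervalIntegral.integral_const_mul,
    int_exp _ h2c, int_exp _ h2, int_exp _ h1]
  have h3 : c ^ 2 - d ^ 2 ≠ 0 := by
    intro h
    apply h1
    have : (c + d) * (c - d) = 0 := by ring_nf; linarith [h]
    rcases mul_eq_zero.1 this with h' | h'
    · exact h'
    · exact absurd h' h2
  rw [mul_zero, mul_zero, mul_zero, Real.exp_zero]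
  field_simp
  ring

lemma swap_lem (a b c d : ℝ) (ha : 0 ≤ a) (hb : 0 ≤ b) :
    (∫ τ' in (0:ℝ)..a, ∫ τ in (0:ℝ)..b, Real.exp (c * (τ + τ') - d * |τ - τ'|))
      = ∫ τ' in (0:ℝ)..b, ∫ τ in (0:ℝ)..a, Real.exp (c * (τ + τ') - d * |τ - τ'|) := by
  have hcont : Continuous fun p : ℝ × ℝ => Real.exp (c * (p.2 + p.1) - d * |p.2 - p.1|) := by
    fun_prop
  have hint : Integrable (Function.uncurry fun x y : ℝ => Real.exp (c * (y + x) - d * |y - x|))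
      ((volume.restrict (Set.Ioc 0 a)).prod (volume.restrict (Set.Ioc 0 b))) := by
    rw [Measure.prod_restrict]
    exact (hcont.continuousOn.integrableOn_compact
      (isCompact_Icc.prod isCompact_Icc)).mono_set
      (Set.prod_mono Set.Ioc_subset_Icc_self Set.Ioc_subset_Icc_self)
  simp only [intervalIntegral.integral_of_le ha, intervalIntegral.integral_of_le hb]
  rw [MeasureTheory.integral_integral_swap hint]
  refine integral_congr_ae (Filter.Eventually.of_forall fun y => ?_)
  refine integral_congr_ae (Filter.Eventually.of_forall fun x => ?_)
  dsimp only
  rw [abs_sub_comm, add_comm y x]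

theorem stmt_12 (a b c d : ℝ) (ha : 0 ≤ a) (hb : 0 ≤ b) (hc : c ≠ 0)
    (hcd : c ^ 2 ≠ d ^ 2) :
    (∫ τ' in (0 : ℝ)..a, ∫ τ in (0 : ℝ)..b, Real.exp (c * (τ + τ') - d * |τ - τ'|))
      = (1 / (c ^ 2 - d ^ 2)) *
        (1 + (d / c) * (1 - Real.exp (2 * c * min a b))
          - Real.exp (c * a - d * |a|) - Real.exp (c * b - d * |b|)
          + Real.exp (c * (a + b) - d * |a - b|)) := by
  have h1 : c + d ≠ 0 := by
    intro h; apply hcd; have : d = -c := by linarith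
    rw [this]; ring
  have h2 : c - d ≠ 0 := by
    intro h; apply hcd; have : d = c := by linarith
    rw [this]
  rw [abs_of_nonneg ha, abs_of_nonneg hb]
  rcases le_total a b with hab | hab
  · rw [min_eq_left hab, abs_of_nonpos (by linarith), key a b c d ha hab hc h1 h2,
      show c * a - d * a = (c - d) * a by ring,
      show c * b - d * b = (c - d) * b by ring,
      show c * (a + b) - d * -(a - b) = (c - d) * b + (c + d) * a by ring, Real.exp_add]
  · rw [swap_lem a b c d ha hb, min_eq_right hab, abs_of_nonneg (by linarith),
      key b a c d hb hab hc h1 h2,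
      show c * a - d * a = (c - d) * a by ring,
      show c * b - d * b = (c - d) * b by ring,
      show c * (a + b) - d * (a - b) = (c - d) * a + (c + d) * b by ring, Real.exp_add]
    ring
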